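/- If n = p^s is a prime power (p prime, s ≥ 1), then the n×n square has no perfect Mondrian partition. -/

import Mathlib

/-- An axis-aligned rectangle with integer coordinates placed on the grid:
lower-left corner `(x, y)`, width `w`, and height `h`. -/
structure Rect where
  x : ℕ
  y : ℕ
  w : ℕ
  h : ℕ
deriving DecidableEq

/-- The area of a rectangle. -/
def Rect.area (r : Rect) : ℕ := r.w * r.h

/-- Two rectangles are congruent if they have the same dimensions,
possibly after a ninety-degree rotation. -/
def Rect.Congruent (r s : Rect) : Prop :=
  (r.w = s.w ∧ r.h = s.h) ∨ (r.w = s.h ∧ r.h = s.w)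

/-- The rectangle `r` covers the unit grid cell `[i, i+1) × [j, j+1)`. -/
def Rect.Covers (r : Rect) (i j : ℕ) : Prop :=
  r.x ≤ i ∧ i < r.x + r.w ∧ r.y ≤ j ∧ j < r.y + r.h

/-- A Mondrian partition of the `n × n` square: a finite collection of
pairwise non-congruent rectangles with positive integer side lengths that
tile the square (every cell of the square is covered by exactly one
rectangle, and rectangles lie inside the square). -/
structure Mondrian (n : ℕ) where
  rects : Finset Rect
  pos : ∀ r ∈ rects, 0 < r.w ∧ 0 < r.h
  inside : ∀ r ∈ rects, r.x + r.w ≤ n ∧ r.y + r.h ≤ n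
  cover : ∀ i j : ℕ, i < n → j < n → ∃! r : Rect, r ∈ rects ∧ r.Covers i j
  noncong : ∀ r ∈ rects, ∀ s ∈ rects, r ≠ s → ¬ r.Congruent s

/-- The defect of a Mondrian partition: the difference between the largest
and the smallest rectangle areas. -/
def Mondrian.defect {n : ℕ} (P : Mondrian n) : ℕ :=
  P.rects.sup fun r => P.rects.sup fun s => r.area - s.area

/-- A Mondrian partition is perfect if all its rectangles have the same area. -/
def Mondrian.IsPerfect {n : ℕ} (P : Mondrian n) : Prop :=
  ∀ r ∈ P.rects, ∀ s ∈ P.rects, r.area = s.area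

/-- `mondrianDk n k` is the minimum defect over all Mondrian partitions of the
`n × n` square using exactly `k` rectangles. -/
noncomputable def mondrianDk (n k : ℕ) : ℕ :=
  sInf {d | ∃ P : Mondrian n, P.rects.card = k ∧ P.defect = d}

/-- `mondrianD n` is the minimum defect over all Mondrian partitions of the
`n × n` square (into at least two rectangles). -/
noncomputable def mondrianD (n : ℕ) : ℕ :=
  sInf {d | ∃ P : Mondrian n, 2 ≤ P.rects.card ∧ P.defect = d}

/-- If `n = p^s` is a prime power, then the `n × n` square has no perfect
Mondrian partition. -/
theorem no_perfect_of_prime_pow (p s : ℕ) (hp : p.Prime) (hs : 1 ≤ s) :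
    ¬ ∃ P : Mondrian (p ^ s), 2 ≤ P.rects.card ∧ P.IsPerfect := by
  classical
  rintro ⟨P, hk2, hperf⟩
  haveI : Inhabited Rect := ⟨⟨0, 0, 0, 0⟩⟩
  choose! f hf hfu using P.cover
  -- fiber of each rectangle has card = area
  have key : ∀ r ∈ P.rects,
      ((Finset.range (p ^ s) ×ˢ Finset.range (p ^ s)).filter
        fun c => f c.1 c.2 = r).card = r.area := by
    intro r hr
    have heq : ((Finset.range (p ^ s) ×ˢ Finset.range (p ^ s)).filter
          fun c => f c.1 c.2 = r)
        = Finset.Ico r.x (r.x + r.w) ×ˢ Finset.Ico r.y (r.y + r.h) := by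
      ext ⟨i, j⟩
      simp only [Finset.mem_filter, Finset.mem_product, Finset.mem_range, Finset.mem_Ico]
      constructor
      · rintro ⟨⟨hi, hj⟩, hfij⟩
        have hc := (hf i j hi hj).2
        rw [hfij] at hc
        exact ⟨⟨hc.1, hc.2.1⟩, hc.2.2.1, hc.2.2.2⟩
      · rintro ⟨⟨hxi, hiw⟩, hyj, hjh⟩
        have hi : i < p ^ s := lt_of_lt_of_le hiw (P.inside r hr).1
        have hj : j < p ^ s := lt_of_lt_of_le hjh (P.inside r hr).2
        exact ⟨⟨hi, hj⟩, (hfu i j hi hj r ⟨hr, hxi, hiw, hyj, hjh⟩).symm⟩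
    rw [heq, Finset.card_product, Nat.card_Ico, Nat.card_Ico, Rect.area,
      Nat.add_sub_cancel_left, Nat.add_sub_cancel_left]
  have hsum : ∑ r ∈ P.rects, r.area = p ^ s * p ^ s := by
    have h1 : (Finset.range (p ^ s) ×ˢ Finset.range (p ^ s)).card
        = ∑ r ∈ P.rects, ((Finset.range (p ^ s) ×ˢ Finset.range (p ^ s)).filter
            fun c => f c.1 c.2 = r).card :=
      Finset.card_eq_sum_card_fiberwise (fun c hc => by
        simp only [Finset.mem_coe, Finset.mem_product, Finset.mem_range] at hc
        exact (hf c.1 c.2 hc.1 hc.2).1)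
    rw [Finset.card_product, Finset.card_range, Finset.sum_congr rfl key] at h1
    exact h1.symm
  obtain ⟨r0, hr0⟩ := Finset.card_pos.mp (by omega : 0 < P.rects.card)
  set A := r0.area with hA0
  have hkA : P.rects.card * A = p ^ s * p ^ s := by
    rw [← hsum, Finset.sum_congr rfl (fun r hr => hperf r hr r0 hr0),
      Finset.sum_const, smul_eq_mul]
  have hnn : p ^ s * p ^ s = p ^ (2 * s) := by
    rw [← pow_add]; congr 1; omega
  have hdvd : P.rects.card ∣ p ^ (2 * s) := ⟨A, by rw [← hnn, ← hkA]⟩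
  obtain ⟨t, ht2s, hkt⟩ := (Nat.dvd_prime_pow hp).mp hdvd
  have ht1 : 1 ≤ t := by
    rcases Nat.eq_zero_or_pos t with h0 | h
    · rw [h0, pow_zero] at hkt; omega
    · exact h
  set m := 2 * s - t with hm
  have hA : A = p ^ m := by
    have hppos : 0 < p ^ t := pow_pos hp.pos t
    apply Nat.eq_of_mul_eq_mul_left hppos
    rw [← hkt, hkA, hnn, hkt, ← pow_add]
    congr 1
    omega
  have hdims : ∀ r ∈ P.rects, ∃ a ∈ Finset.Icc (m - s) (m / 2), min r.w r.h = p ^ a := by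
    intro r hr
    have harea : r.w * r.h = p ^ m := (hperf r hr r0 hr0).trans hA
    obtain ⟨a, ham, hwa⟩ := (Nat.dvd_prime_pow hp).mp ⟨r.h, harea.symm⟩
    obtain ⟨b, hbm, hhb⟩ := (Nat.dvd_prime_pow hp).mp
      (⟨r.w, by rw [← harea]; ring⟩ : r.h ∣ p ^ m)
    have hab : a + b = m := by
      apply Nat.pow_right_injective hp.two_le
      show p ^ (a + b) = p ^ m
      rw [pow_add, ← hwa, ← hhb]; exact harea
    have hwn : r.w ≤ p ^ s := le_trans (Nat.le_add_left _ _) (P.inside r hr).1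
    have hhn : r.h ≤ p ^ s := le_trans (Nat.le_add_left _ _) (P.inside r hr).2
    have has : a ≤ s := by
      rw [hwa] at hwn
      exact (Nat.pow_le_pow_iff_right hp.one_lt).mp hwn
    have hbs : b ≤ s := by
      rw [hhb] at hhn
      exact (Nat.pow_le_pow_iff_right hp.one_lt).mp hhn
    refine ⟨min a b, Finset.mem_Icc.mpr ⟨by omega, by omega⟩, ?_⟩
    rcases le_total a b with h | h
    · rw [min_eq_left h, hwa, hhb,
        min_eq_left (Nat.pow_le_pow_right hp.pos h)]
    · rw [min_eq_right h, hwa, hhb,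
        min_eq_right (Nat.pow_le_pow_right hp.pos h)]
  have hinj : Set.InjOn (fun r : Rect => min r.w r.h) P.rects := by
    intro r hr' r' hr'' hmin
    have hr : r ∈ P.rects := hr'
    have hr2 : r' ∈ P.rects := hr''
    by_contra hne
    apply P.noncong r hr r' hr2 hne
    simp only at hmin
    have hprod : r.w * r.h = r'.w * r'.h :=
      ((hperf r hr r0 hr0).trans (hperf r' hr2 r0 hr0).symm)
    have hminpos : 0 < min r.w r.h := lt_min (P.pos r hr).1 (P.pos r hr).2
    have hmm : ∀ x y : ℕ, min x y * max x y = x * y := by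
      intro x y
      rcases le_total x y with h | h
      · rw [min_eq_left h, max_eq_right h]
      · rw [min_eq_right h, max_eq_left h, Nat.mul_comm]
    have hmax : max r.w r.h = max r'.w r'.h := by
      apply Nat.eq_of_mul_eq_mul_left hminpos
      rw [hmm, hmin, hmm, hprod]
    rw [Rect.Congruent]
    omega
  have hcard : P.rects.card ≤ m / 2 + 1 - (m - s) := by
    calc P.rects.card = (P.rects.image fun r : Rect => min r.w r.h).card :=
          (Finset.card_image_of_injOn hinj).symm
      _ ≤ ((Finset.Icc (m - s) (m / 2)).image (p ^ ·)).card := by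
          apply Finset.card_le_card
          intro x hx
          simp only [Finset.mem_image] at hx ⊢
          obtain ⟨r, hr, hrx⟩ := hx
          obtain ⟨a, ha, hma⟩ := hdims r hr
          exact ⟨a, ha, hrx ▸ hma.symm⟩
      _ ≤ (Finset.Icc (m - s) (m / 2)).card := Finset.card_image_le
      _ = m / 2 + 1 - (m - s) := Nat.card_Icc _ _
  have hp2 : 2 ^ t ≤ p ^ t := Nat.pow_le_pow_left hp.two_le t
  have htlt : t < 2 ^ t := Nat.lt_two_pow_self
  omega
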